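/- The function f(Y) = (1/n²)trace(-2YᵀWY + (1/n²)YᵀDYYᵀDY) on ℝ^{n×K}, with D diagonal positive definite, is coercive: f(Y) → +∞ as ‖Y‖_F → ∞, and f is bounded from below; consequently f attains a global minimum. -/

import Mathlib

open Matrix Filter

/-- The orthogonalization-free objective is coercive and bounded below, hence
attains a global minimum. -/
theorem stmt_4 (n K : ℕ) (hn : 0 < n)
    (W D : Matrix (Fin n) (Fin n) ℝ) (hW : W.IsSymm) (hDdiag : D.IsDiag)
    (hDpos : D.PosDef)
    (f : Matrix (Fin n) (Fin K) ℝ → ℝ)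
    (hf : ∀ Z, f Z = ((n : ℝ) ^ 2)⁻¹ * (trace ((-2 : ℝ) • (Zᵀ * W * Z))
      + ((n : ℝ) ^ 2)⁻¹ * trace (Zᵀ * D * Z * (Zᵀ * D * Z)))) :
    Filter.Tendsto f
        (Filter.comap (fun Y : Matrix (Fin n) (Fin K) ℝ =>
          Real.sqrt (∑ i, ∑ j, (Y i j) ^ 2)) Filter.atTop) Filter.atTop ∧
      BddBelow (Set.range f) ∧ ∃ Y₀, ∀ Y, f Y₀ ≤ f Y := by
  -- the squared Frobenius norm
  set s : Matrix (Fin n) (Fin K) ℝ → ℝ := fun Y => ∑ i, ∑ j, (Y i j) ^ 2 with hs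
  have hsnn : ∀ Y, 0 ≤ s Y := fun Y =>
    Finset.sum_nonneg fun i _ => Finset.sum_nonneg fun j _ => sq_nonneg _
  have hsq : ∀ Y (i : Fin n) (j : Fin K), (Y i j) ^ 2 ≤ s Y := by
    intro Y i j
    calc (Y i j) ^ 2 ≤ ∑ j, (Y i j) ^ 2 :=
          Finset.single_le_sum (f := fun j => (Y i j) ^ 2)
            (fun _ _ => sq_nonneg _) (Finset.mem_univ j)
      _ ≤ s Y :=
          Finset.single_le_sum (f := fun i => ∑ j, (Y i j) ^ 2)
            (fun i _ => Finset.sum_nonneg fun _ _ => sq_nonneg _) (Finset.mem_univ i)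
  rcases Nat.eq_zero_or_pos K with hK | hK
  · -- degenerate case `K = 0`: `f` is identically `0`
    subst hK
    have hf0 : ∀ Z, f Z = 0 := by
      intro Z
      rw [hf]
      simp [Matrix.trace]
    have hbot : (Filter.comap (fun Y : Matrix (Fin n) (Fin 0) ℝ =>
        Real.sqrt (∑ i, ∑ j, (Y i j) ^ 2)) Filter.atTop) = ⊥ := by
      rw [← Filter.empty_mem_iff_bot]
      refine Filter.mem_comap.2 ⟨Set.Ici 1, Filter.mem_atTop 1, ?_⟩
      intro Y hY
      simp [Set.mem_Ici] at hY
    refine ⟨?_, ⟨0, ?_⟩, ⟨0, fun Y => by rw [hf0, hf0]⟩⟩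
    · rw [hbot]; exact tendsto_bot
    · rintro x ⟨Y, rfl⟩
      rw [hf0]
  -- main case `0 < K`
  have hKpos : (0 : ℝ) < K := by exact_mod_cast hK
  have hn2 : (0 : ℝ) < (n : ℝ) ^ 2 := by positivity
  -- the smallest diagonal entry of `D`
  obtain ⟨i₀, -, hi₀⟩ := Finset.exists_min_image Finset.univ (fun i => D i i)
    ⟨⟨0, hn⟩, Finset.mem_univ _⟩
  set d := D i₀ i₀ with hd_def
  have hdle : ∀ i, d ≤ D i i := fun i => hi₀ i (Finset.mem_univ i)
  have hd : 0 < d := by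
    exact hDpos.diag_pos
  -- constant controlling the quadratic term
  set C : ℝ := ∑ j, ∑ i, |W i j| with hC_def
  have hC : 0 ≤ C := Finset.sum_nonneg fun _ _ => Finset.sum_nonneg fun _ _ => abs_nonneg _
  -- quadratic bound
  have htr1 : ∀ Z : Matrix (Fin n) (Fin K) ℝ,
      trace (Zᵀ * W * Z) ≤ (K : ℝ) * C * s Z := by
    intro Z
    have hentry : ∀ k, (Zᵀ * W * Z) k k ≤ C * s Z := by
      intro k
      have he : (Zᵀ * W * Z) k k = ∑ j, ∑ i, Z i k * W i j * Z j k := by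
        simp [Matrix.mul_apply, transpose_apply, Finset.sum_mul]
      rw [he]
      calc ∑ j, ∑ i, Z i k * W i j * Z j k ≤ ∑ j, ∑ i, |W i j| * s Z := by
            refine Finset.sum_le_sum fun j _ => Finset.sum_le_sum fun i _ => ?_
            have h1 := hsq Z i k
            have h2 := hsq Z j k
            have h3 : Z i k * W i j * Z j k ≤ |W i j| * (|Z i k| * |Z j k|) := by
              calc Z i k * W i j * Z j k ≤ |Z i k * W i j * Z j k| := le_abs_self _
                _ = |W i j| * (|Z i k| * |Z j k|) := by
                    rw [abs_mul, abs_mul]; ring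
            refine h3.trans (mul_le_mul_of_nonneg_left ?_ (abs_nonneg _))
            nlinarith [sq_abs (Z i k), sq_abs (Z j k), abs_nonneg (Z i k),
              abs_nonneg (Z j k), sq_nonneg (|Z i k| - |Z j k|)]
        _ = C * s Z := by
            rw [hC_def, Finset.sum_mul]
            exact Finset.sum_congr rfl fun j _ => by rw [Finset.sum_mul]
    calc trace (Zᵀ * W * Z) = ∑ k, (Zᵀ * W * Z) k k := by
          simp [Matrix.trace, Matrix.diag]
      _ ≤ ∑ _k : Fin K, C * s Z := Finset.sum_le_sum fun k _ => hentry k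
      _ = (K : ℝ) * C * s Z := by
          rw [Finset.sum_const, Finset.card_univ, Fintype.card_fin, nsmul_eq_mul]; ring
  -- quartic bound
  have htr2 : ∀ Z : Matrix (Fin n) (Fin K) ℝ,
      d ^ 2 * (s Z) ^ 2 ≤ (K : ℝ) * trace (Zᵀ * D * Z * (Zᵀ * D * Z)) := by
    intro Z
    set M := Zᵀ * D * Z with hMdef
    have hM : ∀ j l, M j l = ∑ i, D i i * Z i j * Z i l := by
      intro j l
      rw [hMdef, Matrix.mul_apply]
      have hrow : ∀ i', (Zᵀ * D) j i' = Z i' j * D i' i' := by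
        intro i'
        rw [Matrix.mul_apply, Finset.sum_eq_single i']
        · simp [transpose_apply]
        · intro b _ hb
          simp [transpose_apply, hDdiag hb]
        · simp
      simp_rw [hrow]
      exact Finset.sum_congr rfl fun i _ => by ring
    have hMsymm : ∀ j l, M l j = M j l := by
      intro j l
      rw [hM, hM]
      exact Finset.sum_congr rfl fun i _ => by ring
    have htrM : d * s Z ≤ ∑ j, M j j := by
      have hdiagsum : ∑ j, M j j = ∑ i, ∑ j, D i i * (Z i j) ^ 2 := by
        simp_rw [hM]
        rw [Finset.sum_comm]
        exact Finset.sum_congr rfl fun i _ => Finset.sum_congr rfl fun j _ => by ring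
      rw [hdiagsum, hs]
      simp only
      rw [Finset.mul_sum]
      refine Finset.sum_le_sum fun i _ => ?_
      rw [Finset.mul_sum]
      exact Finset.sum_le_sum fun j _ =>
        mul_le_mul_of_nonneg_right (hdle i) (sq_nonneg _)
    have hcs : (∑ j, M j j) ^ 2 ≤ (K : ℝ) * ∑ j, (M j j) ^ 2 := by
      simpa [Finset.card_univ] using
        sq_sum_le_card_mul_sum_sq (s := (Finset.univ : Finset (Fin K))) (f := fun j => M j j)
    have htrMM : ∑ j, (M j j) ^ 2 ≤ trace (M * M) := by
      have htr : trace (M * M) = ∑ j, ∑ l, M j l * M l j := by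
        simp [Matrix.trace, Matrix.diag, Matrix.mul_apply]
      rw [htr]
      refine Finset.sum_le_sum fun j _ => ?_
      have hterm : ∀ l, M j l * M l j = (M j l) ^ 2 := fun l => by rw [hMsymm]; ring
      simp_rw [hterm]
      exact Finset.single_le_sum (f := fun l => (M j l) ^ 2)
        (fun l _ => sq_nonneg _) (Finset.mem_univ j)
    have h0 : 0 ≤ d * s Z := mul_nonneg hd.le (hsnn Z)
    calc d ^ 2 * (s Z) ^ 2 = (d * s Z) ^ 2 := by ring
      _ ≤ (∑ j, M j j) ^ 2 := by
          exact pow_le_pow_left₀ h0 htrM 2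
      _ ≤ (K : ℝ) * ∑ j, (M j j) ^ 2 := hcs
      _ ≤ (K : ℝ) * trace (M * M) := by
          exact mul_le_mul_of_nonneg_left htrMM hKpos.le
  -- the lower-bounding one-variable function
  set g : ℝ → ℝ := fun x =>
    ((n : ℝ) ^ 2)⁻¹ * (-2 * ((K : ℝ) * C) * x + ((n : ℝ) ^ 2)⁻¹ * (d ^ 2 / K * x ^ 2))
    with hg_def
  have hlow : ∀ Y, g (s Y) ≤ f Y := by
    intro Y
    rw [hf, hg_def]
    simp only
    have h1 : -2 * ((K : ℝ) * C) * s Y ≤ trace ((-2 : ℝ) • (Yᵀ * W * Y)) := by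
      rw [Matrix.trace_smul, smul_eq_mul]
      nlinarith [htr1 Y]
    have h2 : d ^ 2 / (K : ℝ) * (s Y) ^ 2 ≤ trace (Yᵀ * D * Y * (Yᵀ * D * Y)) := by
      rw [div_mul_eq_mul_div, div_le_iff₀ hKpos]
      nlinarith [htr2 Y]
    have hnn : (0 : ℝ) ≤ ((n : ℝ) ^ 2)⁻¹ := by positivity
    exact mul_le_mul_of_nonneg_left
      (add_le_add h1 (mul_le_mul_of_nonneg_left h2 hnn)) hnn
  have hg : Tendsto g atTop atTop := by
    have hα : (0 : ℝ) < ((n : ℝ) ^ 2)⁻¹ * (((n : ℝ) ^ 2)⁻¹ * (d ^ 2 / K)) := by positivity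
    have h1 : Tendsto (fun x : ℝ =>
        ((n : ℝ) ^ 2)⁻¹ * (((n : ℝ) ^ 2)⁻¹ * (d ^ 2 / K)) * x
          + ((n : ℝ) ^ 2)⁻¹ * (-2 * ((K : ℝ) * C)) ) atTop atTop := by
      refine tendsto_atTop_add_const_right _ _ ?_
      simpa using (tendsto_id (α := ℝ) (x := atTop)).const_mul_atTop hα
    have h2 := (tendsto_id (α := ℝ) (x := atTop)).atTop_mul_atTop₀ h1
    refine h2.congr fun x => ?_
    rw [hg_def]
    simp only [id]
    ring
  -- coercivity along the comap filter
  have hs_comap : Tendsto s (Filter.comap (fun Y : Matrix (Fin n) (Fin K) ℝ =>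
      Real.sqrt (s Y)) Filter.atTop) Filter.atTop := by
    have h1 : Tendsto (fun Y : Matrix (Fin n) (Fin K) ℝ => Real.sqrt (s Y))
        (Filter.comap (fun Y : Matrix (Fin n) (Fin K) ℝ => Real.sqrt (s Y)) Filter.atTop)
        Filter.atTop := tendsto_comap
    have h2 := (tendsto_pow_atTop (two_ne_zero)).comp h1
    exact h2.congr fun Y => Real.sq_sqrt (hsnn Y)
  have part1 : Tendsto f (Filter.comap (fun Y : Matrix (Fin n) (Fin K) ℝ =>
      Real.sqrt (s Y)) Filter.atTop) Filter.atTop :=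
    tendsto_atTop_mono hlow (hg.comp hs_comap)
  -- continuity of `f`
  have hcont : Continuous f := by
    have hfe : f = fun Z => ((n : ℝ) ^ 2)⁻¹ * (trace ((-2 : ℝ) • (Zᵀ * W * Z))
        + ((n : ℝ) ^ 2)⁻¹ * trace (Zᵀ * D * Z * (Zᵀ * D * Z))) := funext hf
    rw [hfe]
    have c1 : Continuous fun Z : Matrix (Fin n) (Fin K) ℝ => Zᵀ * W * Z :=
      (continuous_id.matrix_transpose.matrix_mul continuous_const).matrix_mul continuous_id
    have c2 : Continuous fun Z : Matrix (Fin n) (Fin K) ℝ => Zᵀ * D * Z :=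
      (continuous_id.matrix_transpose.matrix_mul continuous_const).matrix_mul continuous_id
    exact continuous_const.mul (((c1.const_smul (-2 : ℝ)).matrix_trace).add
      (continuous_const.mul ((c2.matrix_mul c2).matrix_trace)))
  -- coercivity on the cocompact filter
  have hbox : ∀ r : ℝ, IsCompact {Y : Matrix (Fin n) (Fin K) ℝ |
      ∀ i j, Y i j ∈ Set.Icc (-r) r} := by
    intro r
    have h1 : {Y : Matrix (Fin n) (Fin K) ℝ | ∀ i j, Y i j ∈ Set.Icc (-r) r} =
        Set.pi Set.univ (fun _ : Fin n => Set.pi Set.univ fun _ : Fin K => Set.Icc (-r) r) := by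
      ext Y
      constructor
      · intro h
        exact fun i _ j _ => Set.mem_Icc.2 (Set.mem_Icc.1 (h i j))
      · intro h i j
        exact Set.mem_Icc.2 (Set.mem_Icc.1 (h i (Set.mem_univ i) j (Set.mem_univ j)))
    rw [h1]
    exact isCompact_univ_pi fun _ => isCompact_univ_pi fun _ => isCompact_Icc
  have hscc : Tendsto s (cocompact (Matrix (Fin n) (Fin K) ℝ)) atTop := by
    rw [tendsto_atTop]
    intro b
    rw [Filter.eventually_iff, Filter.mem_cocompact]
    refine ⟨_, hbox (Real.sqrt (max b 0)), ?_⟩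
    intro Y hY
    simp only [Set.mem_compl_iff, Set.mem_setOf_eq, not_forall] at hY
    obtain ⟨i, j, hij⟩ := hY
    have habs : Real.sqrt (max b 0) < |Y i j| := by
      rw [lt_abs]
      by_contra hc
      push_neg at hc
      exact hij ⟨by linarith [hc.2], hc.1⟩
    have hsqlt : max b 0 < (Y i j) ^ 2 := by
      have h0 : 0 ≤ Real.sqrt (max b 0) := Real.sqrt_nonneg _
      have h1 := pow_lt_pow_left₀ habs h0 (two_ne_zero)
      rwa [Real.sq_sqrt (le_max_right b 0), sq_abs] at h1
    have : b ≤ s Y := le_trans (le_max_left b 0) (le_trans hsqlt.le (hsq Y i j))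
    exact this
  have hfcc : Tendsto f (cocompact (Matrix (Fin n) (Fin K) ℝ)) atTop :=
    tendsto_atTop_mono hlow (hg.comp hscc)
  obtain ⟨Y₀, hY₀⟩ := hcont.exists_forall_le hfcc
  refine ⟨part1, ⟨f Y₀, ?_⟩, ⟨Y₀, hY₀⟩⟩
  rintro x ⟨Y, rfl⟩
  exact hY₀ Y
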